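/- In the structural model with normalization Var(U)=1, the structural coefficient β_u satisfies β_u = R_{Y∼U|W_Z,W_Y,Z} · sqrt( Var(Y)/Var(U) · (1 − R²_{Y∼W_Y,W_Z,Z}) / [ (1 − R²_{W_Z∼U|W_Y,Z}) (1 − R²_{U∼W_Y,Z}) ] ). -/

import Mathlib

open Submodule RealInnerProductSpace

/-- Residual of `A` after orthogonal projection onto the span of the finite set `S`. -/
noncomputable def resid {H : Type*} [NormedAddCommGroup H] [InnerProductSpace ℝ H]
    [CompleteSpace H] (A : H) (S : Set H) (hS : S.Finite) : H :=
  haveI := hS.to_subtype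
  haveI : FiniteDimensional ℝ (span ℝ S) := FiniteDimensional.span_of_finite ℝ hS
  A - (orthogonalProjection (span ℝ S) A : H)

/-- Correlation of two (mean-zero) random variables modeled as Hilbert-space vectors. -/
noncomputable def corr {H : Type*} [NormedAddCommGroup H] [InnerProductSpace ℝ H]
    (a b : H) : ℝ := ⟪a, b⟫ / (‖a‖ * ‖b‖)

/-- Squared multiple correlation `R²_{A∼S} = 1 − Var(A^{⊥S})/Var(A)`. -/
noncomputable def R2m {H : Type*} [NormedAddCommGroup H] [InnerProductSpace ℝ H]
    [CompleteSpace H] (A : H) (S : Set H) (hS : S.Finite) : ℝ :=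
  1 - ⟪resid A S hS, resid A S hS⟫ / ⟪A, A⟫

section Helpers

variable {H : Type*} [NormedAddCommGroup H] [InnerProductSpace ℝ H] [CompleteSpace H]

lemma inner_span_zero {S : Set H} {b : H} (h : ∀ v ∈ S, ⟪v, b⟫ = 0) :
    ∀ x ∈ span ℝ S, ⟪x, b⟫ = 0 := by
  intro x hx
  induction hx using span_induction with
  | mem v hv => exact h v hv
  | zero => simp
  | add x y hx hy ihx ihy => rw [inner_add_left, ihx, ihy]; ring
  | smul a x hx ih => rw [real_inner_smul_left, ih]; ring

lemma inner_span_zero' {S : Set H} {b : H} (h : ∀ v ∈ S, ⟪b, v⟫ = 0) :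
    ∀ x ∈ span ℝ S, ⟪b, x⟫ = 0 := by
  intro x hx
  rw [real_inner_comm]
  exact inner_span_zero (fun v hv => by rw [real_inner_comm]; exact h v hv) x hx

lemma resid_sub_mem (A : H) (S : Set H) (hS : S.Finite) :
    A - resid A S hS ∈ span ℝ S := by
  haveI := hS.to_subtype
  haveI : FiniteDimensional ℝ (span ℝ S) := FiniteDimensional.span_of_finite ℝ hS
  simpa [resid] using (orthogonalProjection (span ℝ S) A).2

lemma resid_inner_right (A : H) (S : Set H) (hS : S.Finite) :
    ∀ x ∈ span ℝ S, ⟪resid A S hS, x⟫ = 0 := by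
  haveI := hS.to_subtype
  haveI : FiniteDimensional ℝ (span ℝ S) := FiniteDimensional.span_of_finite ℝ hS
  intro x hx
  exact (Submodule.mem_orthogonal' _ _).1
    (Submodule.sub_starProjection_mem_orthogonal (K := span ℝ S) A) x hx

lemma resid_eq_of (A : H) (S : Set H) (hS : S.Finite) (r : H)
    (h1 : A - r ∈ span ℝ S) (h2 : ∀ x ∈ span ℝ S, ⟪r, x⟫ = 0) :
    resid A S hS = r := by
  haveI := hS.to_subtype
  haveI : FiniteDimensional ℝ (span ℝ S) := FiniteDimensional.span_of_finite ℝ hS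
  have : (orthogonalProjection (span ℝ S) A : H) = A - r := by
    apply Submodule.eq_starProjection_of_mem_of_inner_eq_zero h1
    intro w hw
    simpa using h2 w hw
  simp [resid, this]

lemma resid_congr {A : H} {S T : Set H} (hS : S.Finite) (hT : T.Finite)
    (h : span ℝ S = span ℝ T) : resid A S hS = resid A T hT := by
  apply resid_eq_of
  · rw [h]; exact resid_sub_mem A T hT
  · rw [h]; exact resid_inner_right A T hT

lemma inner_resid_resid (A B : H) (S : Set H) (hS : S.Finite) :
    ⟪resid A S hS, B⟫ = ⟪resid A S hS, resid B S hS⟫ := by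
  have : B = (B - resid B S hS) + resid B S hS := by abel
  rw [this, inner_add_right,
    resid_inner_right A S hS _ (resid_sub_mem B S hS)]
  simp

/-- Key recursion: squared residual norm after adding one regressor. -/
lemma resid_insert_sq (u w : H) (T : Set H) (hT : T.Finite) :
    ⟪resid u (insert w T) (hT.insert w), resid u (insert w T) (hT.insert w)⟫
      = ⟪resid u T hT, resid u T hT⟫ *
        (1 - (corr (resid w T hT) (resid u T hT))^2) := by
  set rw' := resid w T hT with hrw
  set ru := resid u T hT with hru
  by_cases hw0 : rw' = 0
  · have hmem : w ∈ span ℝ T := by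
      have := resid_sub_mem w T hT
      rwa [← hrw, hw0, sub_zero] at this
    have hspan : span ℝ (insert w T) = span ℝ T := span_insert_eq_span hmem
    rw [resid_congr (hT.insert w) hT hspan]
    simp [corr, hw0]
    rfl
  · have hww : ⟪rw', rw'⟫ ≠ 0 := by
      simpa [inner_self_eq_zero] using hw0
    set c : ℝ := ⟪rw', ru⟫ / ⟪rw', rw'⟫ with hc
    have hkey : resid u (insert w T) (hT.insert w) = ru - c • rw' := by
      apply resid_eq_of
      · have h1 : u - ru ∈ span ℝ T := resid_sub_mem u T hT
        have h2 : w - rw' ∈ span ℝ T := resid_sub_mem w T hT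
        have hle : span ℝ T ≤ span ℝ (insert w T) :=
          span_mono (Set.subset_insert w T)
        have hwmem : w ∈ span ℝ (insert w T) :=
          subset_span (Set.mem_insert w T)
        have : u - (ru - c • rw') = (u - ru) + c • (w - (w - rw')) := by
          module
        rw [this]
        exact add_mem (hle h1) (smul_mem _ _ (sub_mem hwmem (hle h2)))
      · apply inner_span_zero'
        intro v hv
        rcases hv with hv | hv
        · subst hv
          have h2 : v - rw' ∈ span ℝ T := resid_sub_mem v T hT
          have hz1 : ⟪ru, v - rw'⟫ = 0 := resid_inner_right u T hT _ h2
          have hz2 : ⟪rw', v - rw'⟫ = 0 := resid_inner_right v T hT _ h2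
          have hwd : (v : H) = (v - rw') + rw' := by abel
          rw [hwd, inner_add_right, inner_sub_left, inner_sub_left,
            real_inner_smul_left, real_inner_smul_left, hz1, hz2,
            real_inner_comm rw' ru, hc]
          field_simp
          ring
        · have hvmem : v ∈ span ℝ T := subset_span hv
          have hz1 : ⟪ru, v⟫ = 0 := resid_inner_right u T hT _ hvmem
          have hz2 : ⟪rw', v⟫ = 0 := resid_inner_right w T hT _ hvmem
          rw [inner_sub_left, real_inner_smul_left, hz1, hz2]
          ring
    rw [hkey]
    have hexp : ⟪ru - c • rw', ru - c • rw'⟫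
        = ⟪ru, ru⟫ - 2 * c * ⟪rw', ru⟫ + c^2 * ⟪rw', rw'⟫ := by
      rw [inner_sub_left, inner_sub_right, inner_sub_right,
        real_inner_smul_left, real_inner_smul_left, real_inner_smul_right,
        real_inner_smul_right, real_inner_comm ru rw']
      ring
    have hcorr : (corr rw' ru)^2 * (⟪rw', rw'⟫ * ⟪ru, ru⟫) = ⟪rw', ru⟫^2 := by
      rw [corr, div_pow, mul_pow, real_inner_self_eq_norm_sq, real_inner_self_eq_norm_sq]
      by_cases hu0 : ru = 0
      · simp [hu0]
      · have : ‖rw'‖ ≠ 0 := norm_ne_zero_iff.2 hw0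
        have : ‖ru‖ ≠ 0 := norm_ne_zero_iff.2 hu0
        field_simp
    rw [hexp, hc]
    field_simp
    nlinarith [hcorr]

lemma R2m_congr {A : H} {S T : Set H} (hS : S.Finite) (hT : T.Finite)
    (h : S = T) : R2m A S hS = R2m A T hT := by subst h; rfl


end Helpers

/-- Equation (beta_u_r2) in the proof of Theorem 2: in the structural model with
`Var(U) = 1`, the structural coefficient `β_u` satisfies
`β_u = R_{Y∼U|W_Z,W_Y,Z} · √( Var(Y)/Var(U) · (1 − R²_{Y∼W_Y,W_Z,Z}) /
  [(1 − R²_{W_Z∼U|W_Y,Z})(1 − R²_{U∼W_Y,Z})] )`. -/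
theorem stmt_11 {H : Type*} [NormedAddCommGroup H] [InnerProductSpace ℝ H] [CompleteSpace H]
    (Y Z WZ WY U εy εz εwy εwz : H)
    (τ βu βwy βwz γu γwy γwz αu αwz φu : ℝ)
    (hY : Y = βu • U + βwy • WY + βwz • WZ + τ • Z + εy)
    (hZ : Z = γu • U + γwy • WY + γwz • WZ + εz)
    (hWY : WY = αu • U + αwz • WZ + εwy)
    (hWZ : WZ = φu • U + εwz)
    (horth : ∀ i j : Fin 5, i ≠ j →
      ⟪(![εy, εz, εwy, εwz, U]) i, (![εy, εz, εwy, εwz, U]) j⟫ = 0)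
    (hpos : ∀ i : Fin 5, 0 < ⟪(![εy, εz, εwy, εwz, U]) i, (![εy, εz, εwy, εwz, U]) i⟫)
    (hU1 : ⟪U, U⟫ = 1)
    (hvY : resid Y {WZ, WY, Z} (Set.toFinite _) ≠ 0)
    (hvU : resid U {WZ, WY, Z} (Set.toFinite _) ≠ 0)
    (hd1 : 0 < 1 - (corr (resid WZ {WY, Z} (Set.toFinite _))
                      (resid U {WY, Z} (Set.toFinite _)))^2)
    (hd2 : 0 < 1 - R2m U {WY, Z} (Set.toFinite _))
    (hvarY : 0 < ⟪Y, Y⟫) :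
    βu = corr (resid Y {WZ, WY, Z} (Set.toFinite _)) (resid U {WZ, WY, Z} (Set.toFinite _)) *
      Real.sqrt ((⟪Y, Y⟫ / ⟪U, U⟫) * (1 - R2m Y {WY, WZ, Z} (Set.toFinite _)) /
        ((1 - (corr (resid WZ {WY, Z} (Set.toFinite _))
                 (resid U {WY, Z} (Set.toFinite _)))^2) *
         (1 - R2m U {WY, Z} (Set.toFinite _)))) := by
  have hUy : ⟪U, εy⟫ = 0 := by simpa using horth 4 0 (by decide)
  have hwzy : ⟪εwz, εy⟫ = 0 := by simpa using horth 3 0 (by decide)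
  have hwyy : ⟪εwy, εy⟫ = 0 := by simpa using horth 2 0 (by decide)
  have hzy : ⟪εz, εy⟫ = 0 := by simpa using horth 1 0 (by decide)
  have hWZy : ⟪WZ, εy⟫ = 0 := by
    rw [hWZ, inner_add_left, real_inner_smul_left, hUy, hwzy]; ring
  have hWYy : ⟪WY, εy⟫ = 0 := by
    rw [hWY, inner_add_left, inner_add_left, real_inner_smul_left,
      real_inner_smul_left, hUy, hWZy, hwyy]; ring
  have hZy : ⟪Z, εy⟫ = 0 := by
    rw [hZ, inner_add_left, inner_add_left, inner_add_left, real_inner_smul_left,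
      real_inner_smul_left, real_inner_smul_left, hUy, hWYy, hWZy, hzy]; ring
  have hspanY : ∀ x ∈ span ℝ ({WZ, WY, Z} : Set H), ⟪x, εy⟫ = 0 := by
    apply inner_span_zero
    intro v hv
    simp only [Set.mem_insert_iff, Set.mem_singleton_iff] at hv
    rcases hv with rfl | rfl | rfl
    exacts [hWZy, hWYy, hZy]
  set rU := resid U {WZ, WY, Z} (Set.toFinite _) with hrU
  set rY := resid Y {WZ, WY, Z} (Set.toFinite _) with hrY
  have hrUy : ⟪rU, εy⟫ = 0 := by
    have h1 : ⟪U - rU, εy⟫ = 0 := hspanY _ (resid_sub_mem U _ _)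
    rw [inner_sub_left] at h1
    rw [← hUy]; linarith
  have hWZmem : WZ ∈ span ℝ ({WZ, WY, Z} : Set H) := subset_span (by simp)
  have hWYmem : WY ∈ span ℝ ({WZ, WY, Z} : Set H) := subset_span (by simp)
  have hZmem : Z ∈ span ℝ ({WZ, WY, Z} : Set H) := subset_span (by simp)
  have hrUWZ : ⟪rU, WZ⟫ = 0 := resid_inner_right U _ _ _ hWZmem
  have hrUWY : ⟪rU, WY⟫ = 0 := resid_inner_right U _ _ _ hWYmem
  have hrUZ : ⟪rU, Z⟫ = 0 := resid_inner_right U _ _ _ hZmem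
  have hrUU : ⟪rU, U⟫ = ⟪rU, rU⟫ := inner_resid_resid U U _ _
  have hmain : ⟪rU, Y⟫ = βu * ⟪rU, rU⟫ := by
    rw [hY, inner_add_right, inner_add_right, inner_add_right, inner_add_right,
      real_inner_smul_right, real_inner_smul_right, real_inner_smul_right,
      real_inner_smul_right, hrUU, hrUWY, hrUWZ, hrUZ, hrUy]
    ring
  have hYU : ⟪rY, rU⟫ = βu * ⟪rU, rU⟫ := by
    rw [← hmain, real_inner_comm]
    exact (inner_resid_resid U Y _ _).symm
  have hnU : (0:ℝ) < ‖rU‖ := norm_pos_iff.2 hvU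
  have hnY : (0:ℝ) < ‖rY‖ := norm_pos_iff.2 hvY
  have hcorr : corr rY rU = βu * ‖rU‖ / ‖rY‖ := by
    rw [corr, hYU, real_inner_self_eq_norm_mul_norm]
    field_simp
  -- the recursion identity
  have hins : ⟪rU, rU⟫ = ⟪resid U {WY, Z} (Set.toFinite _), resid U {WY, Z} (Set.toFinite _)⟫ *
      (1 - (corr (resid WZ {WY, Z} (Set.toFinite _)) (resid U {WY, Z} (Set.toFinite _)))^2) :=
    resid_insert_sq U WZ {WY, Z} (Set.toFinite _)
  have hsetY : R2m Y {WY, WZ, Z} (Set.toFinite _) = R2m Y {WZ, WY, Z} (Set.toFinite _) :=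
    R2m_congr _ _ (Set.insert_comm WY WZ {Z})
  have hR2Y : 1 - R2m Y {WZ, WY, Z} (Set.toFinite _) = ⟪rY, rY⟫ / ⟪Y, Y⟫ := by
    rw [R2m]; ring
  have hR2U : 1 - R2m U {WY, Z} (Set.toFinite _)
      = ⟪resid U {WY, Z} (Set.toFinite _), resid U {WY, Z} (Set.toFinite _)⟫ := by
    rw [R2m, hU1]; ring
  have harg : (⟪Y, Y⟫ / ⟪U, U⟫) * (1 - R2m Y {WY, WZ, Z} (Set.toFinite _)) /
        ((1 - (corr (resid WZ {WY, Z} (Set.toFinite _))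
                 (resid U {WY, Z} (Set.toFinite _)))^2) *
         (1 - R2m U {WY, Z} (Set.toFinite _))) = (‖rY‖ / ‖rU‖)^2 := by
    rw [hsetY, hR2Y, hR2U, hU1]
    rw [mul_comm (1 - _) _, ← hins, real_inner_self_eq_norm_sq rU,
      real_inner_self_eq_norm_sq rY, div_pow]
    field_simp
  rw [harg, Real.sqrt_sq (by positivity), hcorr]
  field_simp
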